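/- Let G be a finitely generated abelian group (e.g. ℤ^p) acting linearly on a finite-dimensional real vector space E via a representation A. If the fixed space E^G = {v : A(g)v = v for all g} is zero, then every 1-cocycle α : G → E over A (satisfying α(g+h) = α(g) + A(g)α(h)) is a coboundary: there exists x₀ ∈ E with α(g) = x₀ − A(g)x₀ for all g. -/

import Mathlib

open LinearMap Submodule

universe u

/-- Projection along a complement commutes with operators preserving both factors. -/
private lemma proj_comm {E : Type u} [AddCommGroup E] [Module ℝ E]
    (p q : Submodule ℝ E) (h : IsCompl p q) (g : Module.End ℝ E)
    (hp : ∀ x ∈ p, g x ∈ p) (hq : ∀ x ∈ q, g x ∈ q) (x : E) :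
    (p.linearProjOfIsCompl q h (g x) : E) = g (p.linearProjOfIsCompl q h x) := by
  set π := p.linearProjOfIsCompl q h with hπ
  set π' := q.linearProjOfIsCompl p h.symm with hπ'
  have hx : (π x : E) + (π' x : E) = x :=
    Submodule.projection_add_projection_eq_self h x
  have h1 : π (g (π x : E)) = ⟨g (π x : E), hp _ (π x).2⟩ :=
    Submodule.linearProjOfIsCompl_apply_left h ⟨g (π x : E), hp _ (π x).2⟩
  have h2 : π (g (π' x : E)) = 0 :=
    Submodule.projectionOnto_apply_of_mem_right h (hq _ (π' x).2)
  calc (π (g x) : E) = (π (g ((π x : E) + (π' x : E))) : E) := by rw [hx]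
    _ = ((π (g (π x : E)) + π (g (π' x : E))) : p) := by rw [map_add g, map_add π]
    _ = g (π x) := by rw [h1, h2, add_zero]

private lemma key (n : ℕ) : ∀ (E : Type u) [AddCommGroup E] [Module ℝ E]
    [FiniteDimensional ℝ E] (T : Fin n → Module.End ℝ E),
    (∀ i j, T i * T j = T j * T i) →
    (∀ v : E, (∀ i, T i v = v) → v = 0) →
    ∀ a : Fin n → E, (∀ i j, a j - T i (a j) = a i - T j (a i)) →
    ∃ x : E, ∀ i, a i = x - T i x := by
  induction n with
  | zero =>
    intro E _ _ _ T _ _ a _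
    exact ⟨0, fun i => i.elim0⟩
  | succ n ih =>
    intro E _ _ _ T hcomm hfix a hcompat
    set f : Module.End ℝ E := 1 - T (Fin.last n) with hfdef
    have hfapp : ∀ x : E, f x = x - T (Fin.last n) x := fun x => rfl
    have hcj : ∀ j, Commute (T j) f :=
      fun j => (Commute.one_right (T j)).sub_right (hcomm j (Fin.last n))
    -- Fitting decomposition
    obtain ⟨m, hm1, hcompl⟩ :
        ∃ m, 1 ≤ m ∧ IsCompl (ker (f ^ m)) (range (f ^ m)) := by
      obtain ⟨m, h⟩ :=
        ((Filter.eventually_ge_atTop 1).and f.eventually_isCompl_ker_pow_range_pow).exists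
      exact ⟨m, h.1, h.2⟩
    set K := ker (f ^ m) with hKdef
    set I := range (f ^ m) with hIdef
    have hcomm_pow : ∀ j (x : E), (f ^ m) (T j x) = T j ((f ^ m) x) := by
      intro j x
      have := DFunLike.congr_fun ((hcj j).pow_right m).eq x
      simpa [Module.End.mul_apply] using this.symm
    have hTK : ∀ j, ∀ x ∈ K, T j x ∈ K := by
      intro j x hx
      have hx' : (f ^ m) x = 0 := hx
      show (f ^ m) (T j x) = 0
      rw [hcomm_pow, hx', map_zero]
    have hTI : ∀ j, ∀ x ∈ I, T j x ∈ I := by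
      rintro j x ⟨y, rfl⟩
      exact ⟨T j y, (hcomm_pow j y)⟩
    have hfK : ∀ x ∈ K, f x ∈ K := by
      intro x hx
      have hx' : (f ^ m) x = 0 := hx
      show (f ^ m) (f x) = 0
      have : (f ^ m) (f x) = f ((f ^ m) x) := by
        rw [← Module.End.mul_apply, ← Module.End.mul_apply, ← pow_succ, ← pow_succ']
      rw [this, hx', map_zero]
    have hfI : ∀ x ∈ I, f x ∈ I := by
      rintro x ⟨y, rfl⟩
      exact ⟨f y, by rw [← Module.End.mul_apply, ← Module.End.mul_apply, ← pow_succ, ← pow_succ']⟩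
    -- nilpotent fixed-vector lemma on K
    have hW : ∀ v : E, (f ^ m) v = 0 → (∀ i : Fin n, T i.castSucc v = v) → v = 0 := by
      have : ∀ k : ℕ, ∀ v : E, (f ^ k) v = 0 → (∀ i : Fin n, T i.castSucc v = v) → v = 0 := by
        intro k
        induction k with
        | zero => intro v hv _; simpa using hv
        | succ k ihk =>
          intro v hv hfixv
          have hw : (f ^ k) v = 0 := by
            set w := (f ^ k) v with hwdef
            have hfw : f w = 0 := by
              rw [hwdef, ← Module.End.mul_apply, ← pow_succ']
              exact hv
            have hTlast : T (Fin.last n) w = w := by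
              have := hfapp w
              rw [hfw] at this
              exact (sub_eq_zero.mp this.symm).symm
            have hTi : ∀ i : Fin n, T i.castSucc w = w := by
              intro i
              have hc := DFunLike.congr_fun ((hcj i.castSucc).pow_right k).eq v
              simp only [Module.End.mul_apply] at hc
              rw [hwdef, hc, hfixv i]
            have : ∀ j : Fin (n + 1), T j w = w := by
              intro j
              refine Fin.lastCases ?_ ?_ j
              · exact hTlast
              · exact hTi
            exact hfix w this
          exact ihk v hw hfixv
      exact this m
    -- projections
    set prK := K.linearProjOfIsCompl I hcompl with hprK
    set prI := I.linearProjOfIsCompl K hcompl.symm with hprI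
    have hdecomp : ∀ x : E, (prK x : E) + (prI x : E) = x :=
      fun x => Submodule.projection_add_projection_eq_self hcompl x
    have hprKT : ∀ j (x : E), (prK (T j x) : E) = T j (prK x) :=
      fun j x => proj_comm K I hcompl (T j) (hTK j) (hTI j) x
    have hprIT : ∀ j (x : E), (prI (T j x) : E) = T j (prI x) :=
      fun j x => proj_comm I K hcompl.symm (T j) (hTI j) (hTK j) x
    have hprKf : ∀ x : E, (prK (f x) : E) = f (prK x) :=
      fun x => proj_comm K I hcompl f hfK hfI x
    have hprIf : ∀ x : E, (prI (f x) : E) = f (prI x) :=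
      fun x => proj_comm I K hcompl.symm f hfI hfK x
    -- restricted operators on K and the inductive hypothesis
    set T' : Fin n → Module.End ℝ K := fun i => (T i.castSucc).restrict (hTK i.castSucc) with hT'
    have hT'app : ∀ (i : Fin n) (x : K), ((T' i x : K) : E) = T i.castSucc (x : E) :=
      fun i x => rfl
    have hcomm' : ∀ i j, T' i * T' j = T' j * T' i := by
      intro i j
      apply LinearMap.ext
      intro x
      apply Subtype.ext
      show (T i.castSucc) ((T j.castSucc) (x : E)) = (T j.castSucc) ((T i.castSucc) (x : E))
      have := DFunLike.congr_fun (hcomm i.castSucc j.castSucc) (x : E)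
      simpa [Module.End.mul_apply] using this
    have hfix' : ∀ v : K, (∀ i, T' i v = v) → v = 0 := by
      intro v hv
      apply Subtype.ext
      refine hW (v : E) v.2 fun i => ?_
      exact congrArg Subtype.val (hv i)
    set a' : Fin n → K := fun i => prK (a i.castSucc) with ha'
    have hcompat' : ∀ i j, a' j - T' i (a' j) = a' i - T' j (a' i) := by
      intro i j
      apply Subtype.ext
      show (prK (a j.castSucc) : E) - T i.castSucc (prK (a j.castSucc) : E)
          = (prK (a i.castSucc) : E) - T j.castSucc (prK (a i.castSucc) : E)
      rw [← hprKT, ← hprKT, ← Submodule.coe_sub, ← Submodule.coe_sub, ← map_sub, ← map_sub]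
      exact congrArg (fun z => ((prK z : K) : E)) (hcompat i.castSucc j.castSucc)
    obtain ⟨xK, hxK⟩ := ih K T' hcomm' hfix' a' hcompat'
    have hxK' : ∀ i : Fin n, (prK (a i.castSucc) : E) = (xK : E) - T i.castSucc (xK : E) := by
      intro i
      have := congrArg (fun z : K => (z : E)) (hxK i)
      exact this
    -- the restriction of f to I is bijective
    set f' : I →ₗ[ℝ] I := f.restrict hfI with hf'
    have hinj : Function.Injective f' := by
      rw [← LinearMap.ker_eq_bot, LinearMap.ker_eq_bot']
      intro x hx
      have hfx : f (x : E) = 0 := congrArg Subtype.val hx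
      obtain ⟨m', rfl⟩ : ∃ m', m = m' + 1 := ⟨m - 1, (Nat.succ_pred_eq_of_pos hm1).symm⟩
      have hxK : (x : E) ∈ K := by
        show (f ^ (m' + 1)) (x : E) = 0
        rw [pow_succ, Module.End.mul_apply, hfx, map_zero]
      exact Subtype.ext (Submodule.disjoint_def.mp hcompl.disjoint.symm (x : E) x.2 hxK)
    have hsurj : Function.Surjective f' := LinearMap.injective_iff_surjective.mp hinj
    obtain ⟨xI, hxI⟩ := hsurj (prI (a (Fin.last n)))
    have hxI' : f (xI : E) = (prI (a (Fin.last n)) : E) := congrArg Subtype.val hxI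
    -- the K-component of the last equation
    have hlastK : f (xK : E) = (prK (a (Fin.last n)) : E) := by
      set b : E := (prK (a (Fin.last n)) : E) - f (xK : E) with hb
      have hbK : b ∈ K := K.sub_mem (prK _).2 (hfK _ xK.2)
      have hbfix : ∀ i : Fin n, T i.castSucc b = b := by
        intro i
        have hkey : b - T i.castSucc b = 0 := by
          have hTf : T i.castSucc (f (xK : E)) = f (T i.castSucc (xK : E)) := by
            have := DFunLike.congr_fun (hcj i.castSucc).eq (xK : E)
            simpa [Module.End.mul_apply] using this
          have e1 : b - T i.castSucc b
              = ((prK (a (Fin.last n)) : E) - T i.castSucc (prK (a (Fin.last n)) : E))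
                - f ((xK : E) - T i.castSucc (xK : E)) := by
            rw [hb, map_sub f, map_sub (T i.castSucc), hTf]
            abel
          have e2 : (prK (a (Fin.last n)) : E) - T i.castSucc (prK (a (Fin.last n)) : E)
              = f (prK (a i.castSucc) : E) := by
            rw [← hprKT, ← Submodule.coe_sub, ← map_sub,
              hcompat i.castSucc (Fin.last n), ← hfapp, hprKf]
          rw [e1, e2, hxK' i]
          abel
        have := sub_eq_zero.mp hkey
        exact this.symm
      have : b = 0 := hW b hbK hbfix
      have := sub_eq_zero.mp (hb ▸ this)
      exact this.symm
    -- the I-component of the other equations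
    have hcastI : ∀ i : Fin n,
        (prI (a i.castSucc) : E) = (xI : E) - T i.castSucc (xI : E) := by
      intro i
      have hu : (xI : E) - T i.castSucc (xI : E) ∈ I :=
        I.sub_mem xI.2 (hTI i.castSucc _ xI.2)
      have happ : f ((xI : E) - T i.castSucc (xI : E)) = f (prI (a i.castSucc) : E) := by
        have hTf : T i.castSucc (f (xI : E)) = f (T i.castSucc (xI : E)) := by
          have := DFunLike.congr_fun (hcj i.castSucc).eq (xI : E)
          simpa [Module.End.mul_apply] using this
        rw [map_sub f, ← hTf, hxI', ← hprIT, ← Submodule.coe_sub, ← map_sub,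
          hcompat i.castSucc (Fin.last n), ← hfapp, hprIf]
      have := hinj (a₁ := ⟨_, hu⟩) (a₂ := prI (a i.castSucc)) (Subtype.ext happ)
      exact (congrArg Subtype.val this).symm
    -- assemble
    refine ⟨(xK : E) + (xI : E), fun i => ?_⟩
    refine Fin.lastCases ?_ ?_ i
    · have : a (Fin.last n) = f ((xK : E) + (xI : E)) := by
        rw [map_add f, hlastK, hxI', hdecomp]
      rw [this, hfapp]
    · intro i
      have : a i.castSucc = (prK (a i.castSucc) : E) + (prI (a i.castSucc) : E) :=
        (hdecomp _).symm
      rw [this, hxK' i, hcastI i, map_add (T i.castSucc)]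
      abel


/-- Hirsch, degree 1: If a finitely generated abelian group `G` acts
linearly on a finite-dimensional real vector space `E` with trivial fixed space, then every
1-cocycle `α : G → E` is a coboundary. -/
theorem stmt4 (G : Type*) [AddCommGroup G] [AddGroup.FG G]
    (E : Type*) [AddCommGroup E] [Module ℝ E] [FiniteDimensional ℝ E]
    (A : G → (E ≃ₗ[ℝ] E))
    (hA : ∀ g h x, A (g + h) x = A g (A h x))
    (hfix : ∀ v : E, (∀ g, A g v = v) → v = 0)
    (α : G → E)
    (hα : ∀ g h, α (g + h) = α g + A g (α h)) :
    ∃ x₀ : E, ∀ g, α g = x₀ - A g x₀ := by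
  -- basic identities
  have hA0 : ∀ x : E, A 0 x = x := by
    intro x
    have h1 : A 0 (A 0 x) = A 0 x := by
      have := hA 0 0 x
      rw [zero_add] at this
      exact this.symm
    exact (A 0).injective h1
  have hAneg : ∀ (g : G) (x : E), A (-g) (A g x) = x := by
    intro g x
    have := hA (-g) g x
    rw [neg_add_cancel] at this
    rw [← this, hA0]
  have hAneg' : ∀ (g : G) (x : E), A g (A (-g) x) = x := by
    intro g x
    have := hA g (-g) x
    rw [add_neg_cancel] at this
    rw [← this, hA0]
  have hα0 : α 0 = 0 := by
    have := hα 0 0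
    rw [zero_add, hA0] at this
    exact (left_eq_add.mp this)
  -- generators
  obtain ⟨S, hS⟩ : ∃ S : Finset G, AddSubgroup.closure (S : Set G) = ⊤ :=
    (AddGroup.fg_def.mp inferInstance)
  set n := S.card with hn
  set e := S.equivFin with he
  set gen : Fin n → G := fun i => (e.symm i : G) with hgen
  set T : Fin n → Module.End ℝ E := fun i => (A (gen i) : E →ₗ[ℝ] E) with hT
  have hTapp : ∀ (i : Fin n) (x : E), T i x = A (gen i) x := fun i x => rfl
  have hcomm : ∀ i j, T i * T j = T j * T i := by
    intro i j
    apply LinearMap.ext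
    intro x
    show A (gen i) (A (gen j) x) = A (gen j) (A (gen i) x)
    rw [← hA, ← hA, add_comm]
  have hfix' : ∀ v : E, (∀ i, T i v = v) → v = 0 := by
    intro v hv
    apply hfix
    intro g
    set H : AddSubgroup G :=
      { carrier := {g | A g v = v}
        zero_mem' := hA0 v
        add_mem' := by
          intro a b ha hb
          show A (a + b) v = v
          rw [hA, hb, ha]
        neg_mem' := by
          intro a ha
          show A (-a) v = v
          have h1 : A a v = v := ha
          calc A (-a) v = A (-a) (A a v) := by rw [h1]
            _ = v := hAneg a v } with hH
    have hSH : (S : Set G) ⊆ H := by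
      intro s hs
      have : gen (e ⟨s, hs⟩) = s := by
        simp [hgen]
      show A s v = v
      rw [← this]
      exact hv (e ⟨s, hs⟩)
    have : AddSubgroup.closure (S : Set G) ≤ H := AddSubgroup.closure_le H |>.mpr hSH
    rw [hS] at this
    exact this trivial
  set a : Fin n → E := fun i => α (gen i) with ha
  have hcompat : ∀ i j, a j - T i (a j) = a i - T j (a i) := by
    intro i j
    have h1 := hα (gen i) (gen j)
    have h2 := hα (gen j) (gen i)
    rw [add_comm (gen j) (gen i)] at h2
    rw [h1] at h2
    -- h2 : α gᵢ + A gᵢ (α gⱼ) = α gⱼ + A gⱼ (α gᵢ)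
    rw [sub_eq_sub_iff_add_eq_add]
    exact h2.symm
  obtain ⟨x₀, hx₀⟩ := key n E T hcomm hfix' a hcompat
  refine ⟨x₀, fun g => ?_⟩
  set H₂ : AddSubgroup G :=
    { carrier := {g | α g = x₀ - A g x₀}
      zero_mem' := by
        show α 0 = x₀ - A 0 x₀
        rw [hα0, hA0, sub_self]
      add_mem' := by
        intro p q hp hq
        have hp' : α p = x₀ - A p x₀ := hp
        have hq' : α q = x₀ - A q x₀ := hq
        show α (p + q) = x₀ - A (p + q) x₀
        rw [hα, hp', hq', hA]
        rw [map_sub (A p)]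
        abel
      neg_mem' := by
        intro p hp
        have hp' : α p = x₀ - A p x₀ := hp
        show α (-p) = x₀ - A (-p) x₀
        have h1 := hα p (-p)
        rw [add_neg_cancel, hα0] at h1
        have h2 : A p (α (-p)) = -α p := eq_neg_of_add_eq_zero_right h1.symm
        have h3 : α (-p) = A (-p) (A p (α (-p))) := (hAneg p (α (-p))).symm
        rw [h3, h2, hp', map_neg, map_sub (A (-p)), hAneg]
        abel } with hH₂
  have hSH₂ : (S : Set G) ⊆ H₂ := by
    intro s hs
    have hgs : gen (e ⟨s, hs⟩) = s := by simp [hgen]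
    show α s = x₀ - A s x₀
    rw [← hgs]
    exact hx₀ (e ⟨s, hs⟩)
  have : AddSubgroup.closure (S : Set G) ≤ H₂ := AddSubgroup.closure_le H₂ |>.mpr hSH₂
  rw [hS] at this
  exact this trivial
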